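/- (First moment of the truncated Student's t distribution) Let ν > 2, μ ∈ ℝ, σ > 0 and a < b be real numbers. Let t(x|m,s²,ν) = Γ((ν+1)/2)/(√(νπ)·Γ(ν/2)·s) · [1 + ((x−m)/s)²/ν]^(−(ν+1)/2) denote the Student's t density with location m, scale s and ν degrees of freedom, and T(x|m,s²,ν) its CDF. Set σ_ν = σ·√(ν/(ν−2)). Then ∫_a^b x·t(x|μ,σ²,ν) dx = σ_ν·[t((a−μ)/σ_ν | 0, 1, ν−2) − t((b−μ)/σ_ν | 0, 1, ν−2)] + μ·[T(b|μ,σ²,ν) − T(a|μ,σ²,ν)]. Consequently, E(X | a < X < b) = σ_ν·[t((a−μ)/σ_ν|0,1,ν−2) − t((b−μ)/σ_ν|0,1,ν−2)]/(T(b|μ,σ²,ν) − T(a|μ,σ²,ν)) + μ. -/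

import Mathlib

open MeasureTheory Set

/-- First moment of the truncated Student's t distribution: let `t(·|m,s²,df)` denote the
Student's t density with location `m`, scale `s` and `df` degrees of freedom, `T` its CDF,
and `σ_ν = σ·√(ν/(ν−2))` for `ν > 2`.  Then
`∫_a^b x·t(x|μ,σ²,ν) dx = σ_ν·[t((a−μ)/σ_ν|0,1,ν−2) − t((b−μ)/σ_ν|0,1,ν−2)]
+ μ·[T(b|μ,σ²,ν) − T(a|μ,σ²,ν)]`, and consequently
`E(X | a < X < b) = σ_ν·[t((a−μ)/σ_ν|0,1,ν−2) − t((b−μ)/σ_ν|0,1,ν−2)]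
/ (T(b|μ,σ²,ν) − T(a|μ,σ²,ν)) + μ`. -/
theorem stmt_15 (ν μ σ a b : ℝ) (hν : 2 < ν) (hσ : 0 < σ) (hab : a < b) :
    let td : ℝ → ℝ → ℝ → ℝ → ℝ := fun m s df x =>
      Real.Gamma ((df + 1) / 2) /
          (Real.sqrt (df * Real.pi) * Real.Gamma (df / 2) * s) *
        (1 + ((x - m) / s) ^ 2 / df) ^ (-((df + 1) / 2))
    let T : ℝ → ℝ → ℝ → ℝ → ℝ := fun m s df x => ∫ u in Iic x, td m s df u
    let σν := σ * Real.sqrt (ν / (ν - 2))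
    (∫ x in Ioo a b, x * td μ σ ν x) =
      σν * (td 0 1 (ν - 2) ((a - μ) / σν) - td 0 1 (ν - 2) ((b - μ) / σν)) +
        μ * (T μ σ ν b - T μ σ ν a) ∧
    (∫ x in Ioo a b, x * td μ σ ν x) / (∫ x in Ioo a b, td μ σ ν x) =
      σν * (td 0 1 (ν - 2) ((a - μ) / σν) - td 0 1 (ν - 2) ((b - μ) / σν)) /
          (T μ σ ν b - T μ σ ν a) + μ := by
  intro td T σν
  have hν0 : (0:ℝ) < ν := by linarith
  have hν2 : (0:ℝ) < ν - 2 := by linarith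
  have hν1 : (0:ℝ) < ν - 1 := by linarith
  have hπ := Real.pi_pos
  have hσν_def : σν = σ * Real.sqrt (ν / (ν - 2)) := rfl
  have hσν : 0 < σν := by
    rw [hσν_def]; positivity
  have hσν2 : σν ^ 2 = σ ^ 2 * ν / (ν - 2) := by
    rw [hσν_def, mul_pow, Real.sq_sqrt (by positivity : (0:ℝ) ≤ ν / (ν - 2))]; ring
  set C : ℝ := Real.Gamma ((ν + 1) / 2) / (Real.sqrt (ν * Real.pi) * Real.Gamma (ν / 2) * σ) with hCdef
  set f : ℝ → ℝ := fun x => C * (1 + ((x - μ) / σ) ^ 2 / ν) ^ (-((ν + 1) / 2)) with hfdef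
  have htd : td μ σ ν = f := rfl
  have hC : 0 < C := by
    apply div_pos (Real.Gamma_pos_of_pos (by linarith))
    exact mul_pos (mul_pos (Real.sqrt_pos.2 (mul_pos hν0 hπ)) (Real.Gamma_pos_of_pos (by linarith))) hσ
  have hbase : ∀ x : ℝ, 0 < 1 + ((x - μ) / σ) ^ 2 / ν := fun x => by positivity
  have hfpos : ∀ x : ℝ, 0 < f x := fun x =>
    mul_pos hC (Real.rpow_pos_of_pos (hbase x) _)
  -- continuity
  have hcb : Continuous fun x : ℝ => 1 + ((x - μ) / σ) ^ 2 / ν := by fun_prop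
  have hcf : Continuous f :=
    continuous_const.mul (hcb.rpow_const fun x => Or.inl (hbase x).ne')
  -- global integrability
  have hint : Integrable f := by
    have h1 : Integrable (fun y : ℝ => (1 + y ^ 2) ^ (-((ν + 1) / 2))) := by
      have := integrable_rpow_neg_one_add_norm_sq (E := ℝ) (μ := volume) (r := ν + 1)
        (by simp; linarith)
      refine this.congr (Filter.Eventually.of_forall fun y => ?_)
      simp only [Real.norm_eq_abs, sq_abs, neg_div]
    have h2 : Integrable (fun y : ℝ => (1 + (y / (σ * Real.sqrt ν)) ^ 2) ^ (-((ν + 1) / 2))) :=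
      h1.comp_div (by positivity)
    have h3 := (h2.comp_sub_right μ).const_mul C
    refine h3.congr (Filter.Eventually.of_forall fun x => ?_)
    simp only [hfdef]
    congr 3
    rw [div_pow, div_pow, mul_pow, Real.sq_sqrt hν0.le, div_div]
  -- antiderivative
  set K : ℝ := C * σ ^ 2 * ν / (ν - 1) with hKdef
  set F : ℝ → ℝ := fun x => -K * (1 + ((x - μ) / σ) ^ 2 / ν) ^ (-((ν - 1) / 2)) with hFdef
  have hF : ∀ x : ℝ, HasDerivAt F ((x - μ) * f x) x := by
    intro x
    have h0 : HasDerivAt (fun x : ℝ => (x - μ) / σ) (1 / σ) x :=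
      ((hasDerivAt_id x).sub_const μ).div_const σ
    have h1 : HasDerivAt (fun x : ℝ => 1 + ((x - μ) / σ) ^ 2 / ν)
        (2 * ((x - μ) / σ) * (1 / σ) / ν) x := by
      have := ((h0.pow 2).div_const ν).const_add 1
      refine this.congr_deriv ?_
      push_cast
      ring
    have h2 := (h1.rpow_const (p := -((ν - 1) / 2)) (Or.inl (hbase x).ne')).const_mul (-K)
    refine h2.congr_deriv ?_
    rw [show -((ν - 1) / 2) - 1 = -((ν + 1) / 2) by ring]
    simp only [hfdef, hKdef]
    field_simp
  have hFTC : ∫ x in Ioo a b, (x - μ) * f x = F b - F a := by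
    rw [← integral_Ioc_eq_integral_Ioo, ← intervalIntegral.integral_of_le hab.le]
    exact intervalIntegral.integral_eq_sub_of_hasDerivAt (fun x _ => hF x)
      (((continuous_id.sub continuous_const).mul hcf).intervalIntegrable a b)
  -- the constant identity
  have hG1 : Real.Gamma ((ν + 1) / 2) = (ν - 1) / 2 * Real.Gamma ((ν - 1) / 2) := by
    rw [show (ν + 1) / 2 = (ν - 1) / 2 + 1 by ring,
      Real.Gamma_add_one (by positivity : ((ν - 1) / 2 : ℝ) ≠ 0)]
  have hG2 : Real.Gamma (ν / 2) = (ν - 2) / 2 * Real.Gamma ((ν - 2) / 2) := by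
    rw [show ν / 2 = (ν - 2) / 2 + 1 by ring,
      Real.Gamma_add_one (by positivity : ((ν - 2) / 2 : ℝ) ≠ 0)]
  have hs1 : Real.sqrt (ν * Real.pi) = Real.sqrt ν * Real.sqrt Real.pi := Real.sqrt_mul hν0.le _
  have hs2 : Real.sqrt ((ν - 2) * Real.pi) = Real.sqrt (ν - 2) * Real.sqrt Real.pi :=
    Real.sqrt_mul hν2.le _
  have hs3 : Real.sqrt (ν / (ν - 2)) = Real.sqrt ν / Real.sqrt (ν - 2) := Real.sqrt_div hν0.le _
  have hmν : Real.sqrt ν * Real.sqrt ν = ν := Real.mul_self_sqrt hν0.le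
  have hmν2 : Real.sqrt (ν - 2) * Real.sqrt (ν - 2) = ν - 2 := Real.mul_self_sqrt hν2.le
  have hsνne : Real.sqrt ν ≠ 0 := by positivity
  have hsν2ne : Real.sqrt (ν - 2) ≠ 0 := by positivity
  have hsπne : Real.sqrt Real.pi ≠ 0 := by positivity
  have hG2ne : Real.Gamma ((ν - 2) / 2) ≠ 0 := (Real.Gamma_pos_of_pos (by linarith)).ne'
  have hconst : σν * (Real.Gamma ((ν - 1) / 2) /
      (Real.sqrt ((ν - 2) * Real.pi) * Real.Gamma ((ν - 2) / 2) * 1)) = K := by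
    rw [hKdef, hCdef, hG1, hG2, hs1, hs2, hσν_def, hs3]
    field_simp
    linear_combination (ν - 2) * hmν - ν * hmν2
  have hkey : ∀ y : ℝ, σν * td 0 1 (ν - 2) ((y - μ) / σν) = -F y := by
    intro y
    show σν * (Real.Gamma ((ν - 2 + 1) / 2) /
        (Real.sqrt ((ν - 2) * Real.pi) * Real.Gamma ((ν - 2) / 2) * 1) *
        (1 + (((y - μ) / σν - 0) / 1) ^ 2 / (ν - 2)) ^ (-((ν - 2 + 1) / 2))) = -F y
    have hbeq : (((y - μ) / σν - 0) / 1) ^ 2 / (ν - 2) = ((y - μ) / σ) ^ 2 / ν := by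
      rw [sub_zero, div_one, div_pow, div_pow, hσν2]
      field_simp
    rw [show ν - 2 + 1 = ν - 1 by ring, hbeq]
    simp only [hFdef, neg_neg, ← mul_assoc]
    rw [hconst]
    ring
  have hsum : F b - F a = σν * (td 0 1 (ν - 2) ((a - μ) / σν) - td 0 1 (ν - 2) ((b - μ) / σν)) := by
    rw [mul_sub, hkey a, hkey b]; ring
  -- CDF difference
  have hT : T μ σ ν b - T μ σ ν a = ∫ x in Ioo a b, f x := by
    show (∫ u in Iic b, f u) - ∫ u in Iic a, f u = _
    rw [intervalIntegral.integral_Iic_sub_Iic hint.integrableOn hint.integrableOn,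
      intervalIntegral.integral_of_le hab.le, integral_Ioc_eq_integral_Ioo]
  have hB : 0 < ∫ x in Ioo a b, f x := by
    have := intervalIntegral.intervalIntegral_pos_of_pos_on
      (hcf.intervalIntegrable a b) (fun x _ => hfpos x) hab
    rwa [intervalIntegral.integral_of_le hab.le, integral_Ioc_eq_integral_Ioo] at this
  -- main computation
  have hmain : ∫ x in Ioo a b, x * f x = (F b - F a) + μ * ∫ x in Ioo a b, f x := by
    have h1 : IntegrableOn (fun x => (x - μ) * f x) (Ioo a b) :=
      (((continuous_id.sub continuous_const).mul hcf).integrableOn_Icc).mono_set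
        Ioo_subset_Icc_self
    have h2 : IntegrableOn (fun x => μ * f x) (Ioo a b) := (hint.const_mul μ).integrableOn
    calc ∫ x in Ioo a b, x * f x = ∫ x in Ioo a b, ((x - μ) * f x + μ * f x) := by
          congr 1; ext x; ring
      _ = (∫ x in Ioo a b, (x - μ) * f x) + ∫ x in Ioo a b, μ * f x := integral_add h1 h2
      _ = (F b - F a) + μ * ∫ x in Ioo a b, f x := by rw [hFTC, MeasureTheory.integral_const_mul]
  constructor
  · rw [hT, ← hsum, htd]
    exact hmain
  · rw [hT, htd, hmain, ← hsum, add_div, mul_div_assoc, div_self hB.ne', mul_one]
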